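/- For real y, b, and u > d > 0, the convolution integral (1/D)·(1/√(2π(u−d)))·∫₀^∞ x·exp(−(x²/(2D) + (b−x−y)²/(2(u−d)))) dx equals (1/(u−d+D))·{ (√(u−d)/√(2π))·exp(−(y−b)²/(2(u−d))) − (1/2)·((y−b)·√D/√(u−d+D))·exp(−(y−b)²/(2(u−d+D)))·Erfc((y−b)·√D/√(2(u−d)(u−d+D))) }, for any D > 0. -/

import Mathlib

open MeasureTheory Set Real Filter

noncomputable def Erfc (x : ℝ) : ℝ :=
  (2 / Real.sqrt Real.pi) * ∫ t in Set.Ioi x, Real.exp (-t ^ 2)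

private lemma integral_Ioi_shift (f : ℝ → ℝ) (a m : ℝ) :
    ∫ x in Ioi a, f (x - m) = ∫ x in Ioi (a - m), f x := by
  rw [← integral_indicator measurableSet_Ioi, ← integral_indicator measurableSet_Ioi,
    ← integral_sub_right_eq_self ((Ioi (a - m)).indicator f) m]
  congr 1
  ext x
  simp only [Set.indicator, mem_Ioi, sub_lt_sub_iff_right]

private lemma erfc_integral (z : ℝ) :
    ∫ t in Ioi z, Real.exp (-t ^ 2) = (Real.sqrt Real.pi / 2) * Erfc z := by
  have hπ : Real.sqrt Real.pi ≠ 0 := by positivity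
  rw [Erfc]; field_simp

private lemma gauss_moment (α m : ℝ) (hα : 0 < α) :
    ∫ x in Set.Ioi (0:ℝ), x * Real.exp (-(α * (x - m) ^ 2)) =
      m * (Real.sqrt Real.pi / (2 * Real.sqrt α)) * Erfc (-(m * Real.sqrt α)) +
        Real.exp (-(α * m ^ 2)) / (2 * α) := by
  have hsa : 0 < Real.sqrt α := Real.sqrt_pos.2 hα
  have hI1 : IntegrableOn (fun x : ℝ => Real.exp (-(α * (x - m) ^ 2))) (Ioi 0) := by
    have := (integrable_exp_neg_mul_sq hα).comp_sub_right m
    simpa [neg_mul] using this.integrableOn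
  have hI2 : IntegrableOn (fun x : ℝ => (x - m) * Real.exp (-(α * (x - m) ^ 2))) (Ioi 0) := by
    have := (integrable_mul_exp_neg_mul_sq hα).comp_sub_right m
    simpa [neg_mul] using this.integrableOn
  have split : ∀ x : ℝ, x * Real.exp (-(α * (x - m) ^ 2)) =
      m * Real.exp (-(α * (x - m) ^ 2)) + (x - m) * Real.exp (-(α * (x - m) ^ 2)) := by
    intro x; ring
  rw [setIntegral_congr_fun measurableSet_Ioi (fun x _ => split x),
    integral_add (hI1.const_mul m) hI2, MeasureTheory.integral_const_mul]
  congr 1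
  · have h1 : ∫ x in Ioi (0:ℝ), Real.exp (-(α * (x - m) ^ 2)) =
        ∫ x in Ioi (-m), Real.exp (-(α * x ^ 2)) := by
      have := integral_Ioi_shift (fun t => Real.exp (-(α * t ^ 2))) 0 m
      simpa using this
    have h2 : ∫ x in Ioi (-m), Real.exp (-(α * x ^ 2)) =
        (Real.sqrt α)⁻¹ * ∫ x in Ioi (Real.sqrt α * (-m)), Real.exp (-x ^ 2) := by
      have := integral_comp_mul_left_Ioi (fun t => Real.exp (-t ^ 2)) (-m) hsa
      simp only [smul_eq_mul] at this
      rw [← this]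
      congr 1 with x
      rw [mul_pow, Real.sq_sqrt hα.le]
    rw [h1, h2, erfc_integral]
    rw [mul_comm (Real.sqrt α) (-m)]
    field_simp
  · have hcont : ContinuousWithinAt (fun x : ℝ => -Real.exp (-(α * (x - m) ^ 2)) / (2 * α))
        (Ici 0) 0 := Continuous.continuousWithinAt (by continuity)
    have hderiv : ∀ x ∈ Ioi (0:ℝ), HasDerivAt (fun x : ℝ => -Real.exp (-(α * (x - m) ^ 2)) / (2 * α))
        ((x - m) * Real.exp (-(α * (x - m) ^ 2))) x := by
      intro x _
      have h1 : HasDerivAt (fun x : ℝ => -(α * (x - m) ^ 2)) (-(α * (2 * (x - m)))) x := by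
        have := ((hasDerivAt_id x).sub_const m).pow 2
        simpa [mul_comm] using (this.const_mul α).fun_neg
      have h2 := (h1.exp).fun_neg.div_const (2 * α)
      refine h2.congr_deriv ?_
      field_simp
    have htend : Tendsto (fun x : ℝ => -Real.exp (-(α * (x - m) ^ 2)) / (2 * α)) atTop (nhds 0) := by
      have h0 : Tendsto (fun x : ℝ => -(α * (x - m) ^ 2)) atTop atBot := by
        apply Filter.tendsto_neg_atBot_iff.mpr
        apply Filter.Tendsto.const_mul_atTop hα
        exact (tendsto_pow_atTop (two_ne_zero)).comp (tendsto_atTop_add_const_right _ (-m) tendsto_id)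
      have := (Real.tendsto_exp_atBot.comp h0).neg.div_const (2 * α)
      simpa using this
    have key := integral_Ioi_of_hasDerivAt_of_tendsto hcont hderiv hI2 htend
    rw [key]
    simp
    ring_nf

private lemma final_alg (c E1 E2 ER q2 qπ qs qD qsd s D : ℝ)
    (h2 : 0 < q2) (hπ : 0 < qπ) (hqs0 : 0 < qs) (hqD0 : 0 < qD) (hqsd0 : 0 < qsd)
    (hE1 : E1 ≠ 0)
    (hqs : qs ^ 2 = s) (hqD : qD ^ 2 = D) (hqsd : qsd ^ 2 = s + D) :
    1 / D * (1 / (q2 * qπ * qs)) *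
      (E1 * (-c * D / (s + D) * (qπ / (2 * (qsd / (q2 * qD * qs)))) * ER +
        E2 / E1 / (2 * ((s + D) / (2 * D * s))))) =
    1 / (s + D) * (qs / (q2 * qπ) * E2 - 1 / 2 * (c * qD / qsd) * E1 * ER) := by
  subst hqs hqD
  rw [← hqsd] at *
  have h1 : qs ≠ 0 := ne_of_gt hqs0
  have h2' : q2 ≠ 0 := ne_of_gt h2
  have h3 : qπ ≠ 0 := ne_of_gt hπ
  have h4 : qD ≠ 0 := ne_of_gt hqD0
  have h5 : qsd ≠ 0 := ne_of_gt hqsd0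
  field_simp
  ring

private lemma zarg_alg (c q2 qs qD qsd s D : ℝ)
    (h2 : 0 < q2) (hqs0 : 0 < qs) (hqD0 : 0 < qD) (hqsd0 : 0 < qsd)
    (hqD : qD ^ 2 = D) (hqsd : qsd ^ 2 = s + D) :
    -(-c * D / (s + D) * (qsd / (q2 * qD * qs))) = c * qD / (q2 * qs * qsd) := by
  subst hqD
  rw [← hqsd]
  have h1 : qs ≠ 0 := ne_of_gt hqs0
  have h2' : q2 ≠ 0 := ne_of_gt h2
  have h4 : qD ≠ 0 := ne_of_gt hqD0
  have h5 : qsd ≠ 0 := ne_of_gt hqsd0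
  field_simp

theorem h_b3_identity (y b : ℝ) (D d u : ℝ) (hD : 0 < D) (hd : 0 < d) (hu : d < u) :
    (1 / D) * (1 / Real.sqrt (2 * Real.pi * (u - d))) *
        ∫ x in Set.Ioi (0 : ℝ),
          x * Real.exp (-(x ^ 2 / (2 * D) + (b - x - y) ^ 2 / (2 * (u - d)))) =
      (1 / (u - d + D)) *
        ((Real.sqrt (u - d) / Real.sqrt (2 * Real.pi)) *
            Real.exp (-(y - b) ^ 2 / (2 * (u - d))) -
          (1 / 2) * ((y - b) * Real.sqrt D / Real.sqrt (u - d + D)) *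
            Real.exp (-(y - b) ^ 2 / (2 * (u - d + D))) *
            Erfc ((y - b) * Real.sqrt D / Real.sqrt (2 * (u - d) * (u - d + D)))) := by
  have hs : 0 < u - d := sub_pos.2 hu
  set s := u - d with hs_def
  have hsD : 0 < s + D := by linarith
  set A : ℝ := (s + D) / (2 * D * s) with hA_def
  set M : ℝ := -(y - b) * D / (s + D) with hM_def
  have hA : 0 < A := by positivity
  have hint : ∀ x ∈ Ioi (0:ℝ),
      x * Real.exp (-(x ^ 2 / (2 * D) + (b - x - y) ^ 2 / (2 * s))) =
        Real.exp (-(y - b) ^ 2 / (2 * (s + D))) * (x * Real.exp (-(A * (x - M) ^ 2))) := by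
    intro x _
    rw [mul_comm (Real.exp _) _, mul_assoc, ← Real.exp_add]
    congr 2
    rw [hA_def, hM_def]
    field_simp
    ring
  rw [setIntegral_congr_fun measurableSet_Ioi hint, MeasureTheory.integral_const_mul,
    gauss_moment A M hA]
  -- square-root facts
  have hsqD : Real.sqrt D ^ 2 = D := Real.sq_sqrt hD.le
  have hsqs : Real.sqrt s ^ 2 = s := Real.sq_sqrt hs.le
  have hsqsd : Real.sqrt (s + D) ^ 2 = s + D := Real.sq_sqrt hsD.le
  have h2Ds : Real.sqrt (2 * D * s) = Real.sqrt 2 * Real.sqrt D * Real.sqrt s := by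
    rw [Real.sqrt_mul (by positivity), Real.sqrt_mul (by norm_num)]
  have hA' : Real.sqrt A = Real.sqrt (s + D) / (Real.sqrt 2 * Real.sqrt D * Real.sqrt s) := by
    rw [hA_def, Real.sqrt_div hsD.le, h2Ds]
  have h2πs : Real.sqrt (2 * Real.pi * s) = Real.sqrt 2 * Real.sqrt Real.pi * Real.sqrt s := by
    rw [Real.sqrt_mul (by positivity), Real.sqrt_mul (by norm_num)]
  have h2π : Real.sqrt (2 * Real.pi) = Real.sqrt 2 * Real.sqrt Real.pi := by
    rw [Real.sqrt_mul (by norm_num)]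
  have h2ssd : Real.sqrt (2 * s * (s + D)) =
      Real.sqrt 2 * Real.sqrt s * Real.sqrt (s + D) := by
    rw [Real.sqrt_mul (by positivity), Real.sqrt_mul (by norm_num)]
  have hexp2 : Real.exp (-(A * M ^ 2)) =
      Real.exp (-(y - b) ^ 2 / (2 * s)) / Real.exp (-(y - b) ^ 2 / (2 * (s + D))) := by
    rw [eq_div_iff (Real.exp_ne_zero _), ← Real.exp_add]
    congr 1
    rw [hA_def, hM_def]
    field_simp
    ring
  have hZ : -(M * Real.sqrt A) =
      (y - b) * Real.sqrt D / Real.sqrt (2 * s * (s + D)) := by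
    rw [hA', hM_def, h2ssd]
    exact zarg_alg (y - b) (Real.sqrt 2) (Real.sqrt s) (Real.sqrt D) (Real.sqrt (s + D)) s D
      (by positivity) (by positivity) (by positivity) (by positivity) hsqD hsqsd
  rw [hZ, hexp2, hA', hM_def, hA_def, h2πs, h2π]
  exact final_alg (y - b) (Real.exp (-(y - b) ^ 2 / (2 * (s + D))))
    (Real.exp (-(y - b) ^ 2 / (2 * s)))
    (Erfc ((y - b) * Real.sqrt D / Real.sqrt (2 * s * (s + D))))
    (Real.sqrt 2) (Real.sqrt Real.pi) (Real.sqrt s) (Real.sqrt D) (Real.sqrt (s + D)) s D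
    (by positivity) (by positivity) (by positivity) (by positivity) (by positivity)
    (Real.exp_ne_zero _) hsqs hsqD hsqsd
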